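/- Let (𝓑,𝓛,θ) be a Boolean dynamical system with associated C*-correspondence X(𝓑,𝓛,θ,𝓘_α) = ⊕_{α∈𝓛} X_α over 𝓐(𝓑,𝓛,θ), with left action φ. Then φ(χ_A) is a generalized compact operator (i.e., χ_A ∈ J(X)=φ⁻¹(𝔎(X))) if and only if λ_A := |{α ∈ 𝓛 : θ_α(A) ≠ ∅}| is finite; moreover in that case φ(χ_A) = Σ_{α∈Δ_A} Θ_{e_{α,θ_α(A)}, e_{α,θ_α(A)}}. -/

import Mathlib

open scoped ZeroAtInfty
open Filter Topology

/-- The character space 𝓑̂ of a generalized Boolean algebra 𝓑: the space of ultrafilters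
of 𝓑, realized as the nonzero Boolean characters 𝓑 → Bool, with the topology of
pointwise convergence. -/
abbrev BoolCharSpace (B : Type*) [GeneralizedBooleanAlgebra B] : Type _ :=
  {φ : B → Bool // (∀ a b, φ (a ⊓ b) = (φ a && φ b)) ∧ (∀ a b, φ (a ⊔ b) = (φ a || φ b)) ∧
    (∀ a b, φ (a \ b) = (φ a && !φ b)) ∧ φ ⊥ = false ∧ ∃ a, φ a = true}

variable {B : Type*} [GeneralizedBooleanAlgebra B]

theorem isCompact_cylinder (A : B) :
    IsCompact {φ : BoolCharSpace B | φ.1 A = true} := by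
  rw [Subtype.isCompact_iff]
  set K : Set (B → Bool) :=
    {φ | ((∀ a b, φ (a ⊓ b) = (φ a && φ b)) ∧ (∀ a b, φ (a ⊔ b) = (φ a || φ b)) ∧
      (∀ a b, φ (a \ b) = (φ a && !φ b)) ∧ φ ⊥ = false) ∧ φ A = true} with hK
  have himg : Subtype.val '' {φ : BoolCharSpace B | φ.1 A = true} = K := by
    ext φ
    constructor
    · rintro ⟨ψ, hψ, rfl⟩
      exact ⟨⟨ψ.2.1, ψ.2.2.1, ψ.2.2.2.1, ψ.2.2.2.2.1⟩, hψ⟩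
    · rintro ⟨⟨h1, h2, h3, h4⟩, h5⟩
      exact ⟨⟨φ, h1, h2, h3, h4, ⟨A, h5⟩⟩, h5, rfl⟩
  rw [himg]
  have c1 : IsClosed {φ : B → Bool | ∀ a b, φ (a ⊓ b) = (φ a && φ b)} := by
    have he : {φ : B → Bool | ∀ a b, φ (a ⊓ b) = (φ a && φ b)} =
        ⋂ (a : B), ⋂ (b : B), {φ : B → Bool | φ (a ⊓ b) = (φ a && φ b)} := by
      ext φ; simp
    rw [he]
    refine isClosed_iInter fun a => isClosed_iInter fun b => ?_
    have hcont : Continuous ((fun p : Bool × Bool => p.1 && p.2) ∘ fun φ : B → Bool => (φ a, φ b)) :=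
      Continuous.comp continuous_of_discreteTopology
        ((continuous_apply a).prodMk (continuous_apply b))
    exact isClosed_eq (continuous_apply _) hcont
  have c2 : IsClosed {φ : B → Bool | ∀ a b, φ (a ⊔ b) = (φ a || φ b)} := by
    have he : {φ : B → Bool | ∀ a b, φ (a ⊔ b) = (φ a || φ b)} =
        ⋂ (a : B), ⋂ (b : B), {φ : B → Bool | φ (a ⊔ b) = (φ a || φ b)} := by
      ext φ; simp
    rw [he]
    refine isClosed_iInter fun a => isClosed_iInter fun b => ?_
    have hcont : Continuous ((fun p : Bool × Bool => p.1 || p.2) ∘ fun φ : B → Bool => (φ a, φ b)) :=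
      Continuous.comp continuous_of_discreteTopology
        ((continuous_apply a).prodMk (continuous_apply b))
    exact isClosed_eq (continuous_apply _) hcont
  have c3 : IsClosed {φ : B → Bool | ∀ a b, φ (a \ b) = (φ a && !φ b)} := by
    have he : {φ : B → Bool | ∀ a b, φ (a \ b) = (φ a && !φ b)} =
        ⋂ (a : B), ⋂ (b : B), {φ : B → Bool | φ (a \ b) = (φ a && !φ b)} := by
      ext φ; simp
    rw [he]
    refine isClosed_iInter fun a => isClosed_iInter fun b => ?_
    have hcont : Continuous ((fun p : Bool × Bool => p.1 && !p.2) ∘ fun φ : B → Bool => (φ a, φ b)) :=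
      Continuous.comp continuous_of_discreteTopology
        ((continuous_apply a).prodMk (continuous_apply b))
    exact isClosed_eq (continuous_apply _) hcont
  have c4 : IsClosed {φ : B → Bool | φ ⊥ = false} :=
    isClosed_eq (continuous_apply _) continuous_const
  have c5 : IsClosed {φ : B → Bool | φ A = true} :=
    isClosed_eq (continuous_apply _) continuous_const
  have hKeq : K = ({φ : B → Bool | ∀ a b, φ (a ⊓ b) = (φ a && φ b)} ∩
      {φ | ∀ a b, φ (a ⊔ b) = (φ a || φ b)} ∩ {φ | ∀ a b, φ (a \ b) = (φ a && !φ b)} ∩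
      {φ | φ ⊥ = false}) ∩ {φ | φ A = true} := by
    ext φ
    simp only [hK, Set.mem_setOf_eq, Set.mem_inter_iff]
    tauto
  have hclosed : IsClosed K := by
    rw [hKeq]
    exact ((((c1.inter c2).inter c3).inter c4)).inter c5
  exact hclosed.isCompact

/-- χ_A = 1_{Z(A)} ∈ C₀(𝓑̂): the characteristic function of the compact open
cylinder set Z(A) = {φ ∈ 𝓑̂ : φ(A) = 1}. -/
noncomputable def chi (A : B) : C₀(BoolCharSpace B, ℂ) where
  toFun φ := if φ.1 A then 1 else 0
  continuous_toFun :=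
    (continuous_of_discreteTopology (f := fun t : Bool => if t then (1 : ℂ) else 0)).comp
      ((continuous_apply A).comp continuous_subtype_val)
  zero_at_infty' := by
    refine HasCompactSupport.is_zero_at_infty ?_
    refine HasCompactSupport.intro (isCompact_cylinder A) ?_
    intro φ hφ
    simp only [Set.mem_setOf_eq] at hφ
    simp [hφ]

/-- An ideal of a (generalized) Boolean algebra. -/
def BoolIdeal {B : Type*} [GeneralizedBooleanAlgebra B] (I : Set B) : Prop :=
  I.Nonempty ∧ (∀ a ∈ I, ∀ b ∈ I, a ⊔ b ∈ I) ∧ (∀ a ∈ I, ∀ b : B, a ⊓ b ∈ I)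

/-- An action on a generalized Boolean algebra. -/
def IsBoolAction {B : Type*} [GeneralizedBooleanAlgebra B] (f : B → B) : Prop :=
  (∀ a b, f (a ⊓ b) = f a ⊓ f b) ∧ (∀ a b, f (a ⊔ b) = f a ⊔ f b) ∧
    (∀ a b, f (a \ b) = f a \ f b) ∧ f ⊥ = ⊥

section AuxChar

variable {B : Type*} [GeneralizedBooleanAlgebra B]

theorem exists_boolChar (C : B) (hC : C ≠ ⊥) : ∃ φ : BoolCharSpace B, φ.1 C = true := by
  classical
  letI : DistribLattice (Set.Iic C) :=
    { (inferInstance : Lattice (Set.Iic C)) with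
      le_sup_inf := fun x y z =>
        (le_sup_inf : ((x : B) ⊔ (y : B)) ⊓ ((x : B) ⊔ (z : B)) ≤ (x : B) ⊔ (y : B) ⊓ (z : B)) }
  have hdisj : Disjoint ((Order.PFilter.principal (⊤ : Set.Iic C)) : Set (Set.Iic C))
      ((Order.Ideal.principal (⊥ : Set.Iic C)) : Set (Set.Iic C)) := by
    rw [Set.disjoint_left]
    intro x hxF hxI
    have h1 : (⊤ : Set.Iic C) ≤ x := Order.PFilter.mem_principal.1 hxF
    have h2 : x ≤ (⊥ : Set.Iic C) := Order.Ideal.mem_principal.1 hxI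
    have h3 : (⊤ : Set.Iic C) = ⊥ := le_antisymm (h1.trans h2) bot_le
    apply hC
    have h4 := congrArg Subtype.val h3
    simpa using h4
  obtain ⟨J, hJprime, hIJ, hJdisj⟩ :=
    DistribLattice.prime_ideal_of_disjoint_filter_ideal hdisj
  set g : B → Set.Iic C := fun b => ⟨b ⊓ C, inf_le_right⟩ with hg
  have hbotJ : (⊥ : Set.Iic C) ∈ J := hIJ (Order.Ideal.mem_principal.2 le_rfl)
  have htopJ : (⊤ : Set.Iic C) ∉ J := fun h =>
    Set.disjoint_left.1 hJdisj (Order.PFilter.mem_principal.2 le_rfl) h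
  have gbot : g ⊥ = ⊥ := Subtype.ext (by simp [hg])
  have gtop : g C = ⊤ := Subtype.ext (by simp [hg])
  have ginf : ∀ a b, g (a ⊓ b) = g a ⊓ g b := fun a b => Subtype.ext (by
    show (a ⊓ b) ⊓ C = (a ⊓ C) ⊓ (b ⊓ C)
    exact inf_inf_distrib_right a b C)
  have gsup : ∀ a b, g (a ⊔ b) = g a ⊔ g b := fun a b => Subtype.ext (by
    show (a ⊔ b) ⊓ C = (a ⊓ C) ⊔ (b ⊓ C)
    exact inf_sup_right a b C)
  have Pinf : ∀ a b : B, (g (a ⊓ b) ∈ J ↔ g a ∈ J ∨ g b ∈ J) := fun a b => by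
    rw [ginf]
    exact ⟨fun h => hJprime.mem_or_mem h,
      fun h => h.elim (fun h => J.lower inf_le_left h) (fun h => J.lower inf_le_right h)⟩
  have Psup : ∀ a b : B, (g (a ⊔ b) ∈ J ↔ g a ∈ J ∧ g b ∈ J) := fun a b => by
    rw [gsup]
    exact ⟨fun h => ⟨J.lower le_sup_left h, J.lower le_sup_right h⟩,
      fun h => J.sup_mem h.1 h.2⟩
  have Psdiff : ∀ a b : B, (g (a \ b) ∈ J ↔ g a ∈ J ∨ g b ∉ J) := fun a b => by
    have hsx : g (a \ b) ≤ g a := Subtype.mk_le_mk.2 (inf_le_inf_right C sdiff_le)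
    have hsy : g (a \ b) ⊓ g b = ⊥ := Subtype.ext (by
      show ((a \ b) ⊓ C) ⊓ (b ⊓ C) = (⊥ : B)
      refine le_antisymm ?_ bot_le
      calc ((a \ b) ⊓ C) ⊓ (b ⊓ C) ≤ (a \ b) ⊓ b := inf_le_inf inf_le_left inf_le_left
        _ = ⊥ := by rw [inf_comm]; exact inf_sdiff_self_right)
    have hsxy : g (a \ b) ⊔ (g a ⊓ g b) = g a := Subtype.ext (by
      show ((a \ b) ⊓ C) ⊔ ((a ⊓ C) ⊓ (b ⊓ C)) = a ⊓ C
      rw [← inf_inf_distrib_right, ← inf_sup_right, sup_comm, sup_inf_sdiff])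
    constructor
    · intro hs
      by_contra hcon
      push_neg at hcon
      obtain ⟨hx, hy⟩ := hcon
      exact hx (by rw [← hsxy]; exact J.sup_mem hs (J.lower inf_le_right hy))
    · rintro (hx | hy)
      · exact J.lower hsx hx
      · rcases hJprime.mem_or_mem (x := g (a \ b)) (y := g b)
          (by rw [hsy]; exact hbotJ) with h | h
        · exact h
        · exact absurd h hy
  refine ⟨⟨fun b => if g b ∈ J then false else true, ?_, ?_, ?_, ?_, ⟨C, ?_⟩⟩, ?_⟩
  · intro a b
    by_cases ha : g a ∈ J <;> by_cases hb : g b ∈ J <;>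
      simp [Pinf a b, ha, hb]
  · intro a b
    by_cases ha : g a ∈ J <;> by_cases hb : g b ∈ J <;>
      simp [Psup a b, ha, hb]
  · intro a b
    by_cases ha : g a ∈ J <;> by_cases hb : g b ∈ J <;>
      simp [Psdiff a b, ha, hb]
  · simp [gbot, hbotJ]
  · simp [gtop, htopJ]
  · simp [gtop, htopJ]

theorem chi_apply (A : B) (φ : BoolCharSpace B) : chi A φ = if φ.1 A then 1 else 0 := rfl

theorem chi_bot : chi (⊥ : B) = 0 := by
  ext φ
  simp [chi_apply, φ.2.2.2.2.1]

theorem norm_chi_le_one (A : B) : ‖chi A‖ ≤ 1 := by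
  rw [← ZeroAtInftyContinuousMap.norm_toBCF_eq_norm]
  refine (BoundedContinuousFunction.norm_le (by norm_num)).2 fun φ => ?_
  show ‖chi A φ‖ ≤ 1
  rw [chi_apply]
  split <;> simp

theorem norm_chi (A : B) (hA : A ≠ ⊥) : ‖chi A‖ = 1 := by
  obtain ⟨φ, hφ⟩ := exists_boolChar A hA
  refine le_antisymm (norm_chi_le_one A) ?_
  have h := BoundedContinuousFunction.norm_coe_le_norm (ZeroAtInftyContinuousMap.toBCF (chi A)) φ
  rw [ZeroAtInftyContinuousMap.norm_toBCF_eq_norm] at h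
  calc (1 : ℝ) = ‖chi A φ‖ := by rw [chi_apply, hφ]; simp
    _ ≤ ‖chi A‖ := h

end AuxChar

/-- Let X = X(𝓑,𝓛,θ,𝓘_α) = ⊕_{α∈𝓛} X_α be the C*-correspondence over
𝓐(𝓑,𝓛,θ) ⊆ C₀(𝓑̂), with right action `act`, 𝓐-valued inner product `inn`, standard
vectors e_{α,A}, and left action φ (here given by the operators Φ A = φ(χ_A)).
Then φ(χ_A) is a generalized compact operator, i.e. φ(χ_A) belongs to
𝔎(X) = closed span of the rank-one operators Θ_{x,y} : z ↦ x·⟨y,z⟩,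
if and only if λ_A = |{α : θ_α(A) ≠ ∅}| is finite; and in that case
φ(χ_A) = Σ_{α∈Δ_A} Θ_{e_{α,θ_α(A)}, e_{α,θ_α(A)}}. -/
theorem phi_chi_compact_iff {B L X : Type*} [GeneralizedBooleanAlgebra B] [DecidableEq L]
    [NormedAddCommGroup X] [NormedSpace ℂ X]
    (θ : L → B → B) (hθ : ∀ α, IsBoolAction (θ α))
    (I : L → Set B) (hI : ∀ α, BoolIdeal (I α)) (hRI : ∀ (α : L) (A : B), θ α A ∈ I α)
    -- the 𝓐-valued inner product on X (⟨x,y⟩ = Σ_α x_α* y_α)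
    (inn : X → X → C₀(BoolCharSpace B, ℂ))
    -- the right action of 𝓐 on X
    (act : X → C₀(BoolCharSpace B, ℂ) → X)
    -- the standard vectors e_{α,A} (A ∈ 𝓘_α), spanning a dense subspace of X
    (e : L → B → X)
    (hinn_add_left : ∀ x y z, inn (x + y) z = inn x z + inn y z)
    (hinn_add_right : ∀ x y z, inn x (y + z) = inn x y + inn x z)
    (hinn_smul : ∀ (c : ℂ) (x y : X), inn x (c • y) = c • inn x y)
    (hinn_star : ∀ x y, star (inn x y) = inn y x)
    (hinn_act : ∀ x y f, inn x (act y f) = inn x y * f)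
    (hact_add : ∀ x y f, act (x + y) f = act x f + act y f)
    (hact_smul : ∀ (c : ℂ) x f, act (c • x) f = c • act x f)
    (hCS : ∀ x y, ‖inn x y‖ ≤ ‖x‖ * ‖y‖)
    (hnorm : ∀ x, ‖x‖ ^ 2 = ‖inn x x‖)
    (he_inn : ∀ (α β : L) (A C : B), A ∈ I α → C ∈ I β →
      inn (e α A) (e β C) = if α = β then chi (A ⊓ C) else 0)
    (hdense : closure (Submodule.span ℂ {x : X | ∃ α : L, ∃ A ∈ I α, x = e α A}
      : Set X) = Set.univ)
    (hact_e : ∀ (α : L) (A C : B), A ∈ I α → act (e α A) (chi C) = e α (A ⊓ C))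
    -- the left action φ of 𝓐 on X; Φ A = φ(χ_A)
    (Φ : B → (X →L[ℂ] X))
    (hΦ : ∀ (A : B) (β : L), ∀ C ∈ I β, Φ A (e β C) = e β (θ β A ⊓ C))
    (A : B) :
    (Φ A ∈ closure (Submodule.span ℂ
        {T : X →L[ℂ] X | ∃ x y : X, ∀ z, T z = act x (inn y z)} : Set (X →L[ℂ] X)) ↔
      {α : L | θ α A ≠ ⊥}.Finite) ∧
    (∀ F : Finset L, ↑F = {α : L | θ α A ≠ ⊥} →
      ∀ z : X, Φ A z = ∑ α ∈ F, act (e α (θ α A)) (inn (e α (θ α A)) z)) := by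
  classical
  -- derived algebraic facts
  have inn_zero_right : ∀ x : X, inn x 0 = 0 := fun x => by
    simpa using hinn_smul 0 x 0
  have inn_zero_left : ∀ x : X, inn 0 x = 0 := fun x => by
    rw [← hinn_star, inn_zero_right, star_zero]
  have inn_neg_right : ∀ x y : X, inn x (-y) = -inn x y := fun x y => by
    have h := hinn_smul (-1) x y
    rw [neg_one_smul ℂ y, neg_one_smul ℂ (inn x y)] at h
    exact h
  have inn_sub_right : ∀ x y z : X, inn x (y - z) = inn x y - inn x z := fun x y z => by
    rw [sub_eq_add_neg, hinn_add_right, inn_neg_right, ← sub_eq_add_neg]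
  have inn_sub_left : ∀ x y z : X, inn (y - z) x = inn y x - inn z x := fun x y z => by
    rw [← hinn_star x (y - z), inn_sub_right, star_sub, hinn_star, hinn_star]
  have inn_smul_left : ∀ (c : ℂ) (x z : X), inn (c • x) z = (starRingEnd ℂ c) • inn x z :=
    fun c x z => by
      rw [← hinn_star z (c • x), hinn_smul, star_smul, hinn_star]
      rfl
  have eq_zero_of_inn_self : ∀ x : X, inn x x = 0 → x = 0 := fun x h => by
    have h2 := hnorm x
    rw [h, norm_zero] at h2
    exact norm_eq_zero.1 (by nlinarith [norm_nonneg x])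
  have act_addf : ∀ (x : X) (f g : C₀(BoolCharSpace B, ℂ)),
      act x (f + g) = act x f + act x g := fun x f g => by
    have key : inn (act x (f + g) - act x f - act x g) (act x (f + g) - act x f - act x g)
        = 0 := by
      rw [inn_sub_right, inn_sub_right, hinn_act, hinn_act, hinn_act, mul_add]
      abel
    have h := eq_zero_of_inn_self _ key
    rw [sub_sub, sub_eq_zero] at h
    exact h
  have act_smulf : ∀ (c : ℂ) (x : X) (f : C₀(BoolCharSpace B, ℂ)),
      act x (c • f) = c • act x f := fun c x f => by
    have key : inn (act x (c • f) - c • act x f) (act x (c • f) - c • act x f) = 0 := by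
      rw [inn_sub_right, hinn_act, hinn_smul, hinn_act, mul_smul_comm, sub_self]
    have h := eq_zero_of_inn_self _ key
    rwa [sub_eq_zero] at h
  have act_zerof : ∀ x : X, act x 0 = 0 := fun x => by
    simpa using act_smulf 0 x 0
  have norm_act_le : ∀ (x : X) (f : C₀(BoolCharSpace B, ℂ)), ‖act x f‖ ≤ ‖x‖ * ‖f‖ :=
    fun x f => by
      have h1 : ‖act x f‖ ^ 2 = ‖inn (act x f) x * f‖ := by rw [hnorm, hinn_act]
      have h2 : ‖inn (act x f) x * f‖ ≤ ‖inn (act x f) x‖ * ‖f‖ := norm_mul_le _ _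
      have h3 : ‖inn (act x f) x‖ ≤ ‖act x f‖ * ‖x‖ := hCS _ _
      rcases eq_or_lt_of_le (norm_nonneg (act x f)) with h0 | h0
      · rw [← h0]; positivity
      · nlinarith [norm_nonneg f, norm_nonneg x]
  -- the rank one operators
  let rk : X → X → (X →L[ℂ] X) := fun x y =>
    LinearMap.mkContinuous
      { toFun := fun z => act x (inn y z)
        map_add' := fun a b => by
          show act x (inn y (a + b)) = act x (inn y a) + act x (inn y b)
          rw [hinn_add_right, act_addf]
        map_smul' := fun c a => by
          show act x (inn y (c • a)) = c • act x (inn y a)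
          rw [hinn_smul, act_smulf] }
      (‖x‖ * ‖y‖)
      (fun z => by
        calc ‖act x (inn y z)‖ ≤ ‖x‖ * ‖inn y z‖ := norm_act_le _ _
          _ ≤ ‖x‖ * (‖y‖ * ‖z‖) :=
            mul_le_mul_of_nonneg_left (hCS y z) (norm_nonneg x)
          _ = ‖x‖ * ‖y‖ * ‖z‖ := by ring)
  have rk_apply : ∀ (x y z : X), rk x y z = act x (inn y z) := fun _ _ _ => rfl
  set S : Set (X →L[ℂ] X) := {T : X →L[ℂ] X | ∃ x y : X, ∀ z, T z = act x (inn y z)}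
    with hS
  have rk_mem : ∀ x y : X, rk x y ∈ S := fun x y => ⟨x, y, fun z => rfl⟩
  -- basic facts about the generators
  have bot_mem : ∀ α, (⊥ : B) ∈ I α := fun α => by
    obtain ⟨⟨a, ha⟩, _, hinf⟩ := hI α
    simpa using hinf a ha ⊥
  have e_bot : ∀ α, e α (⊥ : B) = 0 := fun α => by
    refine eq_zero_of_inn_self _ ?_
    rw [he_inn α α ⊥ ⊥ (bot_mem α) (bot_mem α), if_pos rfl]
    simp [chi_bot]
  set u : L → X := fun α => e α (θ α A) with hu
  have hu_le : ∀ α, ‖u α‖ ≤ 1 := fun α => by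
    have h := hnorm (u α)
    rw [hu, he_inn α α _ _ (hRI α A) (hRI α A), if_pos rfl, inf_idem] at h
    nlinarith [norm_chi_le_one (θ α A), norm_nonneg (u α)]
  have hu_one : ∀ α, θ α A ≠ ⊥ → ‖u α‖ = 1 := fun α hα => by
    have h := hnorm (u α)
    rw [hu, he_inn α α _ _ (hRI α A) (hRI α A), if_pos rfl, inf_idem,
      norm_chi _ hα] at h
    nlinarith [norm_nonneg (u α)]
  have hΦu : ∀ α, Φ A (u α) = u α := fun α => by
    rw [hu]
    show Φ A (e α (θ α A)) = e α (θ α A)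
    rw [hΦ A α (θ α A) (hRI α A), inf_idem]
  -- the key pointwise computation on generators
  have key : ∀ (F : Finset L), ↑F = {α : L | θ α A ≠ ⊥} → ∀ (β : L), ∀ C ∈ I β,
      Φ A (e β C) = (∑ α ∈ F, rk (u α) (u α)) (e β C) := by
    intro F hF β C hC
    rw [ContinuousLinearMap.sum_apply]
    have hterm : ∀ α ∈ F, rk (u α) (u α) (e β C)
        = if α = β then e β (θ β A ⊓ C) else 0 := by
      intro α _
      rw [rk_apply, hu]
      show act (e α (θ α A)) (inn (e α (θ α A)) (e β C)) = _
      rw [he_inn α β (θ α A) C (hRI α A) hC]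
      by_cases hab : α = β
      · subst hab
        rw [if_pos rfl, if_pos rfl, hact_e α (θ α A) (θ α A ⊓ C) (hRI α A),
          ← inf_assoc, inf_idem]
      · rw [if_neg hab, if_neg hab, act_zerof]
    rw [Finset.sum_congr rfl hterm, Finset.sum_ite_eq' F β (fun _ => e β (θ β A ⊓ C))]
    by_cases hβ : β ∈ F
    · rw [if_pos hβ, hΦ A β C hC]
    · rw [if_neg hβ, hΦ A β C hC]
      have hb : θ β A = ⊥ := by
        by_contra hne
        exact hβ (by rw [← Finset.mem_coe, hF]; exact hne)
      rw [hb, bot_inf_eq, e_bot]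
  -- equality of operators when F enumerates Δ_A
  have heq : ∀ (F : Finset L), ↑F = {α : L | θ α A ≠ ⊥} →
      Φ A = ∑ α ∈ F, rk (u α) (u α) := by
    intro F hF
    ext z
    have hsub : (Submodule.span ℂ {x : X | ∃ α : L, ∃ A ∈ I α, x = e α A} : Set X)
        ⊆ {z : X | Φ A z = (∑ α ∈ F, rk (u α) (u α)) z} := by
      intro w hw
      induction hw using Submodule.span_induction with
      | mem x hx =>
        obtain ⟨β, C, hC, rfl⟩ := hx
        exact key F hF β C hC
      | zero => simp
      | add x y _ _ hx hy => simp only [Set.mem_setOf_eq] at hx hy ⊢; rw [map_add, map_add, hx, hy]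
      | smul c x _ hx => simp only [Set.mem_setOf_eq] at hx ⊢; rw [map_smul, map_smul, hx]
    have hcl : closure (Submodule.span ℂ {x : X | ∃ α : L, ∃ A ∈ I α, x = e α A} : Set X)
        ⊆ {z : X | Φ A z = (∑ α ∈ F, rk (u α) (u α)) z} :=
      closure_minimal hsub
        (isClosed_eq (Φ A).continuous (∑ α ∈ F, rk (u α) (u α)).continuous)
    have hz : z ∈ closure (Submodule.span ℂ {x : X | ∃ α : L, ∃ A ∈ I α, x = e α A}
        : Set X) := by rw [hdense]; trivial
    exact hcl hz
  constructor
  · constructor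
    · -- forward direction: compactness implies finiteness
      intro hmem
      by_contra hinf'
      have hinf : {α : L | θ α A ≠ ⊥}.Infinite := hinf'
      -- vanishing of inner products against span elements
      have P1 : ∀ y ∈ Submodule.span ℂ {x : X | ∃ α : L, ∃ A ∈ I α, x = e α A},
          ∃ G : Finset L, ∀ α ∉ G, inn y (u α) = 0 := by
        intro y hy
        induction hy using Submodule.span_induction with
        | mem x hx =>
          obtain ⟨β, C, hC, rfl⟩ := hx
          refine ⟨{β}, fun α hα => ?_⟩
          rw [hu]
          show inn (e β C) (e α (θ α A)) = 0
          rw [he_inn β α C (θ α A) hC (hRI α A), if_neg]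
          intro h
          exact hα (by simp [h])
        | zero => exact ⟨∅, fun α _ => inn_zero_left _⟩
        | add x y _ _ hx hy =>
          obtain ⟨G1, h1⟩ := hx
          obtain ⟨G2, h2⟩ := hy
          refine ⟨G1 ∪ G2, fun α hα => ?_⟩
          rw [hinn_add_left, h1 α (fun h => hα (Finset.mem_union_left _ h)),
            h2 α (fun h => hα (Finset.mem_union_right _ h)), add_zero]
        | smul c x _ hx =>
          obtain ⟨G, h1⟩ := hx
          exact ⟨G, fun α hα => by rw [inn_smul_left, h1 α hα, smul_zero]⟩
      -- eventual smallness for elements of the span of rank-one operators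
      have P2 : ∀ T ∈ Submodule.span ℂ S, ∀ ε : ℝ, 0 < ε →
          ∃ G : Finset L, ∀ α ∉ G, ‖T (u α)‖ ≤ ε := by
        intro T hT
        induction hT using Submodule.span_induction with
        | mem T hTS =>
          obtain ⟨x, y, hxy⟩ := hTS
          intro ε hε
          have hy : y ∈ closure (Submodule.span ℂ
              {x : X | ∃ α : L, ∃ A ∈ I α, x = e α A} : Set X) := by rw [hdense]; trivial
          obtain ⟨y', hy', hnear⟩ := Metric.mem_closure_iff.1 hy (ε / (‖x‖ + 1))
            (by positivity)
          obtain ⟨G, hG⟩ := P1 y' hy'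
          refine ⟨G, fun α hα => ?_⟩
          have h0 : inn y (u α) = inn (y - y') (u α) := by
            rw [inn_sub_left, hG α hα, sub_zero]
          rw [hxy, h0]
          have hb : ‖act x (inn (y - y') (u α))‖ ≤ ‖x‖ * (‖y - y'‖ * ‖u α‖) :=
            (norm_act_le _ _).trans
              (mul_le_mul_of_nonneg_left (hCS _ _) (norm_nonneg x))
          have hyy' : ‖y - y'‖ < ε / (‖x‖ + 1) := by
            rw [← dist_eq_norm]; exact hnear
          have h2 : ‖x‖ * (‖y - y'‖ * ‖u α‖) ≤ ‖x‖ * ‖y - y'‖ :=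
            mul_le_mul_of_nonneg_left
              (mul_le_of_le_one_right (norm_nonneg (y - y')) (hu_le α)) (norm_nonneg x)
          have h3 : ‖x‖ * ‖y - y'‖ ≤ ε := by
            have hx1 : (0:ℝ) < ‖x‖ + 1 := by positivity
            have := mul_le_mul_of_nonneg_left hyy'.le (norm_nonneg x)
            calc ‖x‖ * ‖y - y'‖ ≤ ‖x‖ * (ε / (‖x‖ + 1)) := this
              _ ≤ (‖x‖ + 1) * (ε / (‖x‖ + 1)) := by
                have : (0:ℝ) ≤ ε / (‖x‖ + 1) := by positivity
                nlinarith
              _ = ε := by field_simp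
          linarith
        | zero => exact fun ε hε => ⟨∅, fun α _ => by simp [hε.le]⟩
        | add T1 T2 _ _ h1 h2 =>
          intro ε hε
          obtain ⟨G1, hG1⟩ := h1 (ε / 2) (by positivity)
          obtain ⟨G2, hG2⟩ := h2 (ε / 2) (by positivity)
          refine ⟨G1 ∪ G2, fun α hα => ?_⟩
          rw [ContinuousLinearMap.add_apply]
          calc ‖T1 (u α) + T2 (u α)‖ ≤ ‖T1 (u α)‖ + ‖T2 (u α)‖ := norm_add_le _ _
            _ ≤ ε / 2 + ε / 2 :=
              add_le_add (hG1 α (fun h => hα (Finset.mem_union_left _ h)))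
                (hG2 α (fun h => hα (Finset.mem_union_right _ h)))
            _ = ε := by ring
        | smul c T _ h1 =>
          intro ε hε
          obtain ⟨G, hG⟩ := h1 (ε / (‖c‖ + 1)) (by positivity)
          refine ⟨G, fun α hα => ?_⟩
          rw [ContinuousLinearMap.smul_apply, norm_smul]
          have hc1 : (0:ℝ) < ‖c‖ + 1 := by positivity
          calc ‖c‖ * ‖T (u α)‖ ≤ ‖c‖ * (ε / (‖c‖ + 1)) :=
              mul_le_mul_of_nonneg_left (hG α hα) (norm_nonneg c)
            _ ≤ (‖c‖ + 1) * (ε / (‖c‖ + 1)) := by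
              have : (0:ℝ) ≤ ε / (‖c‖ + 1) := by positivity
              nlinarith
            _ = ε := by field_simp
      obtain ⟨T, hT, hTnear⟩ := Metric.mem_closure_iff.1 hmem (1/2) (by norm_num)
      obtain ⟨G, hG⟩ := P2 T hT (1/4) (by norm_num)
      obtain ⟨α, hα⟩ := (hinf.diff G.finite_toSet).nonempty
      have hαΔ : θ α A ≠ ⊥ := hα.1
      have hαG : α ∉ G := hα.2
      have h1 : ‖u α‖ = 1 := hu_one α hαΔ
      have h2 : ‖Φ A (u α) - T (u α)‖ ≤ ‖Φ A - T‖ * ‖u α‖ := by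
        rw [← ContinuousLinearMap.sub_apply]
        exact (Φ A - T).le_opNorm _
      have h3 : ‖Φ A - T‖ < 1/2 := by rw [← dist_eq_norm]; exact hTnear
      have h4 : ‖T (u α)‖ ≤ 1/4 := hG α hαG
      have h5 : ‖u α‖ ≤ ‖Φ A (u α) - T (u α)‖ + ‖T (u α)‖ := by
        calc ‖u α‖ = ‖Φ A (u α)‖ := by rw [hΦu α]
          _ = ‖(Φ A (u α) - T (u α)) + T (u α)‖ := by rw [sub_add_cancel]
          _ ≤ ‖Φ A (u α) - T (u α)‖ + ‖T (u α)‖ := norm_add_le _ _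
      rw [h1] at h2 h5
      rw [mul_one] at h2
      linarith
    · -- reverse direction: finiteness implies compactness
      intro hfin
      have hF : ↑hfin.toFinset = {α : L | θ α A ≠ ⊥} := hfin.coe_toFinset
      rw [heq hfin.toFinset hF]
      exact subset_closure (Submodule.sum_mem _ fun α _ => Submodule.subset_span (rk_mem _ _))
  · intro F hF z
    rw [heq F hF, ContinuousLinearMap.sum_apply]
    exact Finset.sum_congr rfl fun α _ => rk_apply (u α) (u α) z
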